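/- Consider the weighted Copeland construction on {p,a,b,c}: votes p ≻ a ≻ b ≻ c of weight wᵢ for wᵢ ∈ W (∑ W = 2K), and votes a ≻ p ≻ b ≻ c and c ≻ b ≻ a ≻ p each of weight K+1, tie-breaking a ≻ b ≻ c ≻ p, 0 ≤ α < 1. If all W-votes are replaced by orders ranking p first and p wins, then at least one of the three pairwise contests among a, b, c is an exact tie. -/

import Mathlib

/-- The four candidates. -/
inductive Cand : Type
  | p | a | b | c
deriving DecidableEq

instance : Fintype Cand :=
  Fintype.ofList [Cand.p, Cand.a, Cand.b, Cand.c] (by intro x; cases x <;> simp)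

open Cand

/-- Weighted pairwise margin `D(x,y)`. -/
def marg (E : Multiset (ℕ × List Cand)) (x y : Cand) : ℤ :=
  (E.map fun v => if v.2.idxOf x < v.2.idxOf y then (v.1 : ℤ) else -(v.1 : ℤ)).sum

/-- Copeland^α score of `x`: number of pairwise wins plus `α` times the number of
pairwise ties. -/
noncomputable def copelandScore (al : ℝ) (E : Multiset (ℕ × List Cand)) (x : Cand) : ℝ :=
  (((Finset.univ.erase x).filter fun y => 0 < marg E x y).card : ℝ) +
    al * (((Finset.univ.erase x).filter fun y => marg E x y = 0).card : ℝ)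

/-- `x` wins w.r.t. a score function and a tie-breaking priority order. -/
def Wins {S : Type} [LinearOrder S] (score : Cand → S) (prio : Cand → ℕ) (x : Cand) : Prop :=
  ∀ y, y ≠ x → score y < score x ∨ (score y = score x ∧ prio x < prio y)

/-- Tie-breaking order `a ≻ b ≻ c ≻ p`. -/
def prioABCP : Cand → ℕ
  | Cand.a => 0
  | Cand.b => 1
  | Cand.c => 2
  | Cand.p => 3


section Aux
open Cand

lemma marg_add' (E F : Multiset (ℕ × List Cand)) (x y : Cand) :
    marg (E + F) x y = marg E x y + marg F x y := by
  simp [marg]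

lemma marg_swap' (E : Multiset (ℕ × List Cand)) (x y : Cand) (hxy : x ≠ y)
    (h : ∀ v ∈ E, x ∈ v.2 ∧ y ∈ v.2) : marg E y x = - marg E x y := by
  unfold marg
  rw [← Multiset.sum_map_neg', Multiset.map_map]
  refine congrArg _ (Multiset.map_congr rfl ?_)
  intro v hv
  obtain ⟨hx, hy⟩ := h v hv
  have hne : v.2.idxOf x ≠ v.2.idxOf y := fun hE => hxy ((List.idxOf_inj hx).mp hE)
  rcases lt_or_gt_of_ne hne with h1 | h1
  · simp [h1, not_lt.mpr h1.le]
  · simp [h1, not_lt.mpr h1.le]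

lemma margV (V : Multiset (ℕ × List Cand))
    (hrank : ∀ v ∈ V, v.2.Perm [p, a, b, c] ∧ v.2.head? = some p)
    (x : Cand) (hx : x ≠ p) : marg V p x = ((V.map Prod.fst).sum : ℤ) := by
  unfold marg
  rw [Nat.cast_multiset_sum, Multiset.map_map]
  refine congrArg _ (Multiset.map_congr rfl ?_)
  intro v hv
  obtain ⟨t, ht⟩ : ∃ t, v.2 = p :: t := by
    have h2 := (hrank v hv).2
    rcases hl : v.2 with _ | ⟨h, t⟩
    · rw [hl] at h2; simp at h2
    · rw [hl] at h2; simp at h2; exact ⟨t, by rw [h2]⟩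
  rw [ht, if_pos]
  · rfl
  · rw [List.idxOf_cons_self, List.idxOf_cons_ne _ (Ne.symm hx)]
    exact Nat.succ_pos _

lemma score_ge_two (al : ℝ) (hal : 0 ≤ al) (E : Multiset (ℕ × List Cand))
    (x y z : Cand) (hyz : y ≠ z) (hy : y ≠ x) (hz : z ≠ x)
    (h1 : 0 < marg E x y) (h2 : 0 < marg E x z) : (2 : ℝ) ≤ copelandScore al E x := by
  have hsub : ({y, z} : Finset Cand) ⊆
      (Finset.univ.erase x).filter (fun w => 0 < marg E x w) := by
    intro t ht
    simp only [Finset.mem_insert, Finset.mem_singleton] at ht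
    rcases ht with rfl | rfl <;> simp [Finset.mem_filter, Finset.mem_erase, *]
  have hcard : 2 ≤ ((Finset.univ.erase x).filter (fun w => 0 < marg E x w)).card := by
    have := Finset.card_le_card hsub
    rwa [Finset.card_insert_of_notMem (by simp [hyz]), Finset.card_singleton] at this
  have h2' : (2 : ℝ) ≤ (((Finset.univ.erase x).filter (fun w => 0 < marg E x w)).card : ℝ) := by
    exact_mod_cast hcard
  have h3 : 0 ≤ al * (((Finset.univ.erase x).filter fun w => marg E x w = 0).card : ℝ) := by
    positivity
  unfold copelandScore
  linarith

end Aux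

/-- Copeland construction: `W`-votes (`∑ W = 2K`) replaced by arbitrary orders ranking
`p` first, plus fixed votes `a ≻ p ≻ b ≻ c` and `c ≻ b ≻ a ≻ p` each of weight `K + 1`;
tie-breaking `a ≻ b ≻ c ≻ p`, `0 ≤ α < 1`. If `p` wins the Copeland^α election, then at
least one of the three pairwise contests among `a`, `b`, `c` is an exact tie. -/
theorem stmt_11 (K : ℕ) (hK : 0 < K) (W : Multiset ℕ)
    (hpos : ∀ w ∈ W, 0 < w) (hsum : W.sum = 2 * K)
    (al : ℝ) (hal0 : 0 ≤ al) (hal1 : al < 1)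
    (V : Multiset (ℕ × List Cand)) (hV : V.map Prod.fst = W)
    (hrank : ∀ v ∈ V, v.2.Perm [p, a, b, c] ∧ v.2.head? = some p) :
    let E : Multiset (ℕ × List Cand) := V + {(K + 1, [a, p, b, c]), (K + 1, [c, b, a, p])}
    Wins (copelandScore al E) prioABCP p →
      (marg E a b = 0 ∨ marg E b c = 0 ∨ marg E a c = 0) := by
  intro E hwin
  by_contra hcon
  push_neg at hcon
  obtain ⟨hab, hbc, hac⟩ := hcon
  have hE : E = V + {(K + 1, [a, p, b, c]), (K + 1, [c, b, a, p])} := rfl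
  have hVsum : ((V.map Prod.fst).sum : ℤ) = 2 * K := by rw [hV, hsum]; push_cast; ring
  have hK' : (0 : ℤ) < 2 * K := by omega
  have hmem : ∀ v ∈ E, ∀ x : Cand, x ∈ v.2 := by
    intro v hv x
    rw [hE, Multiset.mem_add] at hv
    rcases hv with hv | hv
    · exact ((hrank v hv).1.mem_iff).mpr (by fin_cases x <;> simp)
    · simp only [Multiset.insert_eq_cons, Multiset.mem_cons, Multiset.mem_singleton] at hv
      rcases hv with rfl | rfl <;> fin_cases x <;> simp
  have hswap : ∀ x y : Cand, x ≠ y → marg E y x = - marg E x y := fun x y hxy =>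
    marg_swap' E x y hxy (fun v hv => ⟨hmem v hv x, hmem v hv y⟩)
  have hFpa : marg {(K + 1, [a, p, b, c]), (K + 1, [c, b, a, p])} p a = -(2 * K + 2) := by
    simp [marg]; ring
  have hFpb : marg {(K + 1, [a, p, b, c]), (K + 1, [c, b, a, p])} p b = 0 := by
    simp [marg]
  have hFpc : marg {(K + 1, [a, p, b, c]), (K + 1, [c, b, a, p])} p c = 0 := by
    simp [marg]
  have hpa : marg E p a = -2 := by
    rw [hE, marg_add', margV V hrank a (by simp), hVsum, hFpa]; ring
  have hpb : marg E p b = 2 * K := by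
    rw [hE, marg_add', margV V hrank b (by simp), hVsum, hFpb]; ring
  have hpc : marg E p c = 2 * K := by
    rw [hE, marg_add', margV V hrank c (by simp), hVsum, hFpc]; ring
  have hscp : copelandScore al E p = 2 := by
    have e1 : (Finset.univ.erase p).filter (fun y => 0 < marg E p y) = {b, c} := by
      ext y; fin_cases y <;> simp [hpa, hpb, hpc, hK']
    have e2 : (Finset.univ.erase p).filter (fun y => marg E p y = 0) = ∅ := by
      ext y; fin_cases y <;> simp [hpa, hpb, hpc, hK'.ne']
    rw [copelandScore, e1, e2, show ({b, c} : Finset Cand).card = 2 from by decide]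
    norm_num
  have hlt : ∀ x : Cand, x ≠ p → copelandScore al E x < 2 := by
    intro x hx
    rcases hwin x hx with h | ⟨_, h⟩
    · rwa [hscp] at h
    · exfalso; revert h; fin_cases x <;> simp [prioABCP]
  have hap : 0 < marg E a p := by rw [hswap p a (by simp), hpa]; norm_num
  have h1 : marg E a b < 0 := by
    rcases lt_trichotomy (marg E a b) 0 with h | h | h
    · exact h
    · exact absurd h hab
    · exact absurd (score_ge_two al hal0 E a p b (by simp) (by simp) (by simp) hap h)
        (not_le.mpr (hlt a (by simp)))
  have h2 : marg E a c < 0 := by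
    rcases lt_trichotomy (marg E a c) 0 with h | h | h
    · exact h
    · exact absurd h hac
    · exact absurd (score_ge_two al hal0 E a p c (by simp) (by simp) (by simp) hap h)
        (not_le.mpr (hlt a (by simp)))
  have hba : 0 < marg E b a := by rw [hswap a b (by simp)]; omega
  have h3 : marg E b c < 0 := by
    rcases lt_trichotomy (marg E b c) 0 with h | h | h
    · exact h
    · exact absurd h hbc
    · exact absurd (score_ge_two al hal0 E b a c (by simp) (by simp) (by simp) hba h)
        (not_le.mpr (hlt b (by simp)))
  have hca : 0 < marg E c a := by rw [hswap a c (by simp)]; omega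
  have hcb : 0 < marg E c b := by rw [hswap b c (by simp)]; omega
  exact absurd (score_ge_two al hal0 E c a b (by simp) (by simp) (by simp) hca hcb)
    (not_le.mpr (hlt c (by simp)))
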